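/- arXiv:0901.2211 — 6 statements merged into one kernel-verified Lean document; each statement's English description precedes it below -/
import Mathlib

section
/- Let α = (α₁,…,αₙ) ∈ ℤⁿ be nonzero, let m ≤ n, and assume α_{m+1} = ⋯ = αₙ = 0 and that the ℤ-submodule ℤ·α of ℤⁿ is saturated. Then there exists a surjective ℤ-module homomorphism ψ : ℤⁿ → ℤⁿ⁻¹ with kernel ℤ·α such that ψ(e⁽ⁿ⁾ⱼ) = e⁽ⁿ⁻¹⁾ⱼ₋₁ for all j = m+1,…,n, where e⁽ⁿ⁾ⱼ denotes the j-th standard basis vector of ℤⁿ. -/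
/-- The saturation of a `ℤ`-submodule `M ⊆ ℤⁿ`:
`Sat(M) = {α ∈ ℤⁿ ∣ λ • α ∈ M for some nonzero λ ∈ ℤ}`. -/
def Sat {n : ℕ} (M : Submodule ℤ (Fin n → ℤ)) : Submodule ℤ (Fin n → ℤ) where
  carrier := {α | ∃ l : ℤ, l ≠ 0 ∧ l • α ∈ M}
  zero_mem' := ⟨1, one_ne_zero, by simp⟩
  add_mem' := by
    rintro a b ⟨l, hl, hla⟩ ⟨m, hm, hmb⟩
    refine ⟨l * m, mul_ne_zero hl hm, ?_⟩
    have h1 : (l * m) • a ∈ M := by rw [mul_comm, mul_smul]; exact M.smul_mem m hla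
    have h2 : (l * m) • b ∈ M := by rw [mul_smul]; exact M.smul_mem l hmb
    rw [smul_add]; exact M.add_mem h1 h2
  smul_mem' := by
    rintro c a ⟨l, hl, hla⟩
    exact ⟨l, hl, by rw [smul_comm]; exact M.smul_mem c hla⟩

/-- `M ⊆ ℤⁿ` is weak-transversal to `E ⊆ {1,…,n}` if it admits a finite system of
`ℤ`-module generators all of whose coordinates indexed by `E` are nonnegative. -/
def WeakTransversal {n : ℕ} (M : Submodule ℤ (Fin n → ℤ)) (E : Set (Fin n)) : Prop :=
  ∃ (ℓ : ℕ) (α : Fin ℓ → Fin n → ℤ),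
    (∀ i, ∀ j ∈ E, 0 ≤ α i j) ∧ Submodule.span ℤ (Set.range α) = M

/-- `E_M = {j ∈ E ∣ prⱼ(M) ≠ 0}`. -/
def EM {n : ℕ} (M : Submodule ℤ (Fin n → ℤ)) (E : Set (Fin n)) : Set (Fin n) :=
  {j ∈ E | ∃ γ ∈ M, γ j ≠ 0}

private lemma aux_psi0 {m : ℕ} (β c : Fin m → ℤ) (hc : ∑ k, c k * β k = 1) :
    ∃ ψ₀ : (Fin m → ℤ) →ₗ[ℤ] (Fin (m-1) → ℤ),
      Function.Surjective ψ₀ ∧ ∀ x, ψ₀ x = 0 ↔ ∃ t : ℤ, x = t • β := by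
  classical
  set f : (Fin m → ℤ) →ₗ[ℤ] ℤ :=
    { toFun := fun x => ∑ k, c k * x k
      map_add' := by intro x y; simp [mul_add, Finset.sum_add_distrib]
      map_smul' := by intro t x; simp [Finset.mul_sum, smul_eq_mul, mul_left_comm] } with hf
  have hfβ : f β = 1 := hc
  set P : (Fin m → ℤ) →ₗ[ℤ] (Fin m → ℤ) := LinearMap.id - f.smulRight β with hPdef
  have hP : ∀ x, P x = x - f x • β := fun x => rfl
  set K := LinearMap.ker f with hK
  have hPK : ∀ x, P x ∈ K := by
    intro x
    rw [hK, LinearMap.mem_ker, hP x, map_sub, map_smul, hfβ, smul_eq_mul, mul_one, sub_self]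
  set π : (Fin m → ℤ) →ₗ[ℤ] K := LinearMap.codRestrict K P hPK with hπ
  have hπval : ∀ x, (π x : Fin m → ℤ) = x - f x • β := fun x => rfl
  have hfsm : ∀ (t : ℤ) (y : Fin m → ℤ), f y = 0 → f (t • β + y) = t := by
    intro t y hy
    rw [map_add, map_smul, hfβ, hy, smul_eq_mul, mul_one, add_zero]
  set e : (Fin m → ℤ) ≃ₗ[ℤ] ℤ × K :=
    LinearEquiv.ofLinear (LinearMap.prod f π)
      ((LinearMap.fst ℤ ℤ K).smulRight β + K.subtype.comp (LinearMap.snd ℤ ℤ K))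
      (by
        apply LinearMap.ext
        rintro ⟨t, y⟩
        have hy : f (y : Fin m → ℤ) = 0 := y.2
        apply Prod.ext
        · show f (t • β + (y : Fin m → ℤ)) = t
          exact hfsm t _ hy
        · apply Subtype.ext
          show (t • β + (y : Fin m → ℤ)) - f (t • β + (y : Fin m → ℤ)) • β = (y : Fin m → ℤ)
          rw [hfsm t _ hy]
          abel)
      (by
        apply LinearMap.ext
        intro x
        show f x • β + (x - f x • β) = x
        abel) with he
  obtain ⟨d, bK⟩ := Submodule.basisOfPid (Pi.basisFun ℤ (Fin m)) K
  haveI : Module.Finite ℤ K := Module.Finite.of_basis bK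
  haveI : Module.Free ℤ K := Module.Free.of_basis bK
  have hfr2 : Module.finrank ℤ (Fin m → ℤ) = 1 + d := by
    rw [e.finrank_eq, Module.finrank_prod, Module.finrank_self,
      Module.finrank_eq_card_basis bK, Fintype.card_fin]
  have hfr1 : Module.finrank ℤ (Fin m → ℤ) = m := Module.finrank_fin_fun ℤ
  have hd : d = m - 1 := by omega
  set bK' : Module.Basis (Fin (m-1)) ℤ K := bK.reindex (finCongr hd) with hbK'
  refine ⟨bK'.equivFun.toLinearMap.comp π, ?_, ?_⟩
  · intro y
    refine ⟨((bK'.equivFun.symm y : K) : Fin m → ℤ), ?_⟩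
    set z : K := bK'.equivFun.symm y with hz
    have hz0 : f ((z : K) : Fin m → ℤ) = 0 := z.2
    have hπz : π ((z : K) : Fin m → ℤ) = z := by
      apply Subtype.ext
      rw [hπval, hz0, zero_smul, sub_zero]
    show bK'.equivFun (π (z : Fin m → ℤ)) = y
    rw [hπz, hz]
    exact bK'.equivFun.apply_symm_apply y
  · intro x
    constructor
    · intro hx
      have h1 : bK'.equivFun (π x) = 0 := hx
      have h0 : π x = 0 := by
        apply bK'.equivFun.injective
        rw [h1, map_zero]
      have hPx : x - f x • β = 0 := by
        have := congrArg (Subtype.val) h0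
        rw [hπval] at this
        exact this
      exact ⟨f x, (sub_eq_zero.mp hPx)⟩
    · rintro ⟨t, rfl⟩
      have hft : f (t • β) = t := by rw [map_smul, hfβ, smul_eq_mul, mul_one]
      have hπt : π (t • β) = 0 := by
        apply Subtype.ext
        rw [hπval, hft]
        exact sub_self _
      show bK'.equivFun (π (t • β)) = 0
      rw [hπt, map_zero]

/-- If `α ∈ ℤⁿ` is nonzero, `α_{m+1} = ⋯ = αₙ = 0` (i.e. `α j = 0` for all
`0`-indexed `j` with `m ≤ j`), and `ℤ·α` is saturated, then there is a surjective
`ℤ`-linear map `ψ : ℤⁿ → ℤⁿ⁻¹` with kernel `ℤ·α` sending the `j`-th standard basis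
vector to the `(j-1)`-st one for `j = m+1,…,n`. -/
theorem exists_surjective_ker_span_single {n : ℕ} (α : Fin n → ℤ) (hα : α ≠ 0)
    (m : ℕ) (hm : m ≤ n) (hzero : ∀ j : Fin n, m ≤ (j : ℕ) → α j = 0)
    (hsat : Sat (Submodule.span ℤ {α}) = Submodule.span ℤ {α}) :
    ∃ ψ : (Fin n → ℤ) →ₗ[ℤ] (Fin (n - 1) → ℤ),
      Function.Surjective ψ ∧
      LinearMap.ker ψ = Submodule.span ℤ {α} ∧
      ∀ j : Fin n, m ≤ (j : ℕ) →
        ∀ i : Fin (n - 1), (i : ℕ) + 1 = (j : ℕ) →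
          ψ (Pi.single j 1) = Pi.single i 1 := by
  classical
  obtain ⟨j₀, hj₀⟩ : ∃ j, α j ≠ 0 := by
    by_contra h
    push_neg at h
    exact hα (funext h)
  have hm1 : 1 ≤ m := by
    by_contra h
    exact hj₀ (hzero j₀ (by omega))
  -- Bezout
  have hbez : ∃ c : Fin n → ℤ, ∑ i, c i * α i = 1 := by
    set I : Ideal ℤ := Ideal.span (Set.range α) with hI
    obtain ⟨g, hg⟩ := (inferInstance : I.IsPrincipal).principal
    have hdvd : ∀ i, g ∣ α i := fun i => by
      have h1 : α i ∈ I := Ideal.subset_span ⟨i, rfl⟩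
      rw [hg] at h1
      exact Ideal.mem_span_singleton.mp h1
    have hgne : g ≠ 0 := by
      rintro rfl
      exact hj₀ (zero_dvd_iff.mp (hdvd j₀))
    set β' : Fin n → ℤ := fun i => α i / g with hβ'
    have hgβ : g • β' = α := by
      funext i
      simpa [hβ', smul_eq_mul] using Int.mul_ediv_cancel' (hdvd i)
    have hmem : β' ∈ Sat (Submodule.span ℤ {α}) :=
      ⟨g, hgne, by rw [hgβ]; exact Submodule.mem_span_singleton_self α⟩
    rw [hsat] at hmem
    obtain ⟨c0, hc0⟩ := Submodule.mem_span_singleton.mp hmem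
    have hgc : g * c0 = 1 := by
      have h1 : (g * c0) * α j₀ = 1 * α j₀ := by
        rw [one_mul, mul_assoc]
        conv_rhs => rw [← hgβ, ← hc0]
        simp [Pi.smul_apply, smul_eq_mul]
      exact mul_right_cancel₀ hj₀ h1
    have htop : I = ⊤ := by
      rw [hg]; exact Ideal.span_singleton_eq_top.mpr (IsUnit.of_mul_eq_one (a := g) c0 hgc)
    have h1mem : (1 : ℤ) ∈ Submodule.span ℤ (Set.range α) := by
      have : (1 : ℤ) ∈ I := by rw [htop]; trivial
      exact this
    obtain ⟨c, hc⟩ := (Submodule.mem_span_range_iff_exists_fun ℤ).mp h1mem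
    exact ⟨c, by simpa [smul_eq_mul] using hc⟩
  obtain ⟨c, hc⟩ := hbez
  set β : Fin m → ℤ := fun k => α (Fin.castLE hm k) with hβ
  have hsum : ∑ k : Fin m, c (Fin.castLE hm k) * β k = 1 := by
    rw [← hc]
    have h2 : ∑ k : Fin m, c (Fin.castLE hm k) * β k
        = ∑ i ∈ Finset.univ.map (Fin.castLEEmb hm), c i * α i := by
      rw [Finset.sum_map]
      rfl
    rw [h2]
    apply Finset.sum_subset (Finset.subset_univ _)
    intro i _ hi
    have him : m ≤ (i : ℕ) := by
      by_contra hlt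
      push_neg at hlt
      exact hi (Finset.mem_map.mpr ⟨⟨(i : ℕ), hlt⟩, Finset.mem_univ _, rfl⟩)
    rw [hzero i him, mul_zero]
  obtain ⟨ψ₀, hsurj₀, hker₀⟩ := aux_psi0 β (fun k => c (Fin.castLE hm k)) hsum
  set res : (Fin n → ℤ) →ₗ[ℤ] (Fin m → ℤ) := LinearMap.funLeft ℤ ℤ (Fin.castLE hm) with hres
  set ψ : (Fin n → ℤ) →ₗ[ℤ] (Fin (n-1) → ℤ) :=
    { toFun := fun x i =>
        if h : (i : ℕ) + 1 < m then ψ₀ (res x) ⟨(i : ℕ), by omega⟩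
        else x ⟨(i : ℕ) + 1, by have := i.isLt; omega⟩
      map_add' := by
        intro x y
        funext i
        by_cases h : (i : ℕ) + 1 < m <;> simp [h]
      map_smul' := by
        intro t x
        funext i
        by_cases h : (i : ℕ) + 1 < m
        · simp only [dif_pos h, RingHom.id_apply, Pi.smul_apply, map_smul, smul_eq_mul]
        · simp only [dif_neg h, RingHom.id_apply, Pi.smul_apply, smul_eq_mul] } with hψ
  have hψapp : ∀ (x : Fin n → ℤ) (i : Fin (n-1)),
      ψ x i = if h : (i : ℕ) + 1 < m then ψ₀ (res x) ⟨(i : ℕ), by omega⟩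
        else x ⟨(i : ℕ) + 1, by have := i.isLt; omega⟩ := fun x i => rfl
  refine ⟨ψ, ?_, ?_, ?_⟩
  · -- surjective
    intro y
    obtain ⟨x₀, hx₀⟩ := hsurj₀ (fun k : Fin (m-1) => y ⟨(k : ℕ), by have := k.isLt; omega⟩)
    refine ⟨fun j => if h : (j : ℕ) < m then x₀ ⟨(j : ℕ), h⟩
      else y ⟨(j : ℕ) - 1, by have := j.isLt; omega⟩, ?_⟩
    funext i
    rw [hψapp]
    by_cases h : (i : ℕ) + 1 < m
    · rw [dif_pos h]
      have hre : res (fun j => if h : (j : ℕ) < m then x₀ ⟨(j : ℕ), h⟩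
          else y ⟨(j : ℕ) - 1, by have := j.isLt; omega⟩) = x₀ := by
        funext k
        show (if h : ((Fin.castLE hm k : Fin n) : ℕ) < m then _ else _) = x₀ k
        rw [dif_pos (by simpa using k.isLt)]
        exact congrArg x₀ (Fin.ext (by simp))
      rw [hre, hx₀]
    · rw [dif_neg h]
      rw [dif_neg (by simpa using h)]
      exact congrArg y (Fin.ext (by simp))
  · -- kernel
    ext x
    rw [LinearMap.mem_ker, Submodule.mem_span_singleton]
    constructor
    · intro hx
      have h₁ : ψ₀ (res x) = 0 := by
        funext k
        have hk := k.isLt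
        have h2 := congrFun hx (⟨(k : ℕ), by omega⟩ : Fin (n-1))
        rw [hψapp, dif_pos (by simpa using (by omega : (k:ℕ) + 1 < m))] at h2
        exact h2
      obtain ⟨t, ht⟩ := (hker₀ _).mp h₁
      refine ⟨t, ?_⟩
      funext j
      by_cases hj : (j : ℕ) < m
      · have h2 := congrFun ht (⟨(j : ℕ), hj⟩ : Fin m)
        have h3 : res x ⟨(j : ℕ), hj⟩ = x j := rfl
        have h4 : (t • β) (⟨(j : ℕ), hj⟩ : Fin m) = t * α j := by
          simp [hβ, smul_eq_mul]
        rw [h3, h4] at h2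
        simpa [smul_eq_mul] using h2.symm
      · have hjm : m ≤ (j : ℕ) := le_of_not_gt hj
        have hx0 : x j = 0 := by
          have h3 := congrFun hx (⟨(j : ℕ) - 1, by have := j.isLt; omega⟩ : Fin (n-1))
          rw [hψapp, dif_neg (by simp; omega)] at h3
          have h4 : (⟨((j : ℕ) - 1) + 1, by have := j.isLt; omega⟩ : Fin n) = j :=
            Fin.ext (by simp; omega)
          rw [h4] at h3
          exact h3
        simp [hx0, hzero j hjm]
    · rintro ⟨t, rfl⟩
      funext i
      rw [hψapp]
      by_cases h : (i : ℕ) + 1 < m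
      · rw [dif_pos h]
        have hre : res (t • α) = t • β := rfl
        rw [hre, (hker₀ _).mpr ⟨t, rfl⟩]
        rfl
      · rw [dif_neg h]
        have hle : m ≤ (i : ℕ) + 1 := le_of_not_gt h
        have hα0 : α ⟨(i : ℕ) + 1, by have := i.isLt; omega⟩ = 0 := hzero _ hle
        rw [Pi.smul_apply, hα0, smul_eq_mul, mul_zero, Pi.zero_apply]
  · -- basis vectors
    intro j hj i hij
    funext i'
    rw [hψapp]
    by_cases h : (i' : ℕ) + 1 < m
    · rw [dif_pos h]
      have hres0 : res (Pi.single j (1:ℤ)) = 0 := by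
        funext k
        have hne : Fin.castLE hm k ≠ j := by
          intro hEq
          have : (k : ℕ) = (j : ℕ) := by rw [← hEq]; simp
          have := k.isLt
          omega
        show (Pi.single j (1:ℤ) : Fin n → ℤ) (Fin.castLE hm k) = (0 : Fin m → ℤ) k
        rw [Pi.single_eq_of_ne hne, Pi.zero_apply]
      rw [hres0, map_zero]
      have hne' : i' ≠ i := by
        intro hEq
        rw [hEq] at h
        omega
      rw [Pi.single_eq_of_ne hne']
      rfl
    · rw [dif_neg h]
      by_cases hii : i' = i
      · subst hii
        have hidx : (⟨(i' : ℕ) + 1, by have := i'.isLt; omega⟩ : Fin n) = j :=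
          Fin.ext (by simpa using hij)
        rw [hidx, Pi.single_eq_same, Pi.single_eq_same]
      · have h1 : (⟨(i' : ℕ) + 1, by have := i'.isLt; omega⟩ : Fin n) ≠ j := by
          intro hEq
          apply hii
          apply Fin.ext
          have h2 := congrArg Fin.val hEq
          simp at h2
          omega
        rw [Pi.single_eq_of_ne h1, Pi.single_eq_of_ne hii]
end

section
/- Let M ⊆ ℤⁿ be a ℤ-submodule and E ⊆ {1,…,n} a subset. Then M is weak-transversal to E if and only if there exists γ ∈ M with γⱼ > 0 for all j ∈ E_M. -/
theorem weakTransversal_iff_exists_pos' {n : ℕ}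
    (M : Submodule ℤ (Fin n → ℤ)) (E : Set (Fin n)) :
    (∃ (ℓ : ℕ) (α : Fin ℓ → Fin n → ℤ),
    (∀ i, ∀ j ∈ E, 0 ≤ α i j) ∧ Submodule.span ℤ (Set.range α) = M) ↔
    ∃ γ ∈ M, ∀ j ∈ ({j ∈ E | ∃ γ ∈ M, γ j ≠ 0} : Set (Fin n)), 0 < γ j := by
  constructor
  · rintro ⟨ℓ, α, hnn, hspan⟩
    refine ⟨∑ i, α i, Submodule.sum_mem _ (fun i _ => hspan ▸ Submodule.subset_span ⟨i, rfl⟩), ?_⟩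
    rintro j ⟨hjE, δ, hδM, hδj⟩
    have hex : ∃ i, α i j ≠ 0 := by
      by_contra h
      push_neg at h
      have hle : M ≤ LinearMap.ker (LinearMap.proj (R := ℤ) (φ := fun _ : Fin n => ℤ) j) := by
        rw [← hspan]
        apply Submodule.span_le.mpr
        rintro x ⟨i, rfl⟩
        simpa [LinearMap.mem_ker] using h i
      exact hδj (hle hδM)
    obtain ⟨i, hi⟩ := hex
    have hsum : (∑ i, α i) j = ∑ i, α i j := by simp
    rw [hsum]
    exact Finset.sum_pos' (fun i _ => hnn i j hjE)
      ⟨i, Finset.mem_univ i, lt_of_le_of_ne (hnn i j hjE) (Ne.symm hi)⟩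
  · rintro ⟨γ, hγM, hγ⟩
    have hMzero : ∀ j ∈ E, (¬ (j ∈ E ∧ ∃ δ ∈ M, δ j ≠ 0)) → ∀ δ ∈ M, δ j = 0 := by
      intro j hj hjm δ hδ
      by_contra h
      exact hjm ⟨hj, δ, hδ, h⟩
    obtain ⟨S, hS⟩ : M.FG := IsNoetherian.noetherian M
    set β : Fin S.card → (Fin n → ℤ) := fun i => ((S.equivFin.symm i : S) : Fin n → ℤ) with hβ
    have hβmem : ∀ i, β i ∈ M := fun i => by
      rw [← hS]; exact Submodule.subset_span (S.equivFin.symm i).2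
    set N : Fin S.card → ℕ := fun i => Finset.univ.sup (fun j => (-(β i j)).toNat) with hN
    have hNle : ∀ i j, -(β i j) ≤ (N i : ℤ) := by
      intro i j
      calc -(β i j) ≤ ((-(β i j)).toNat : ℤ) := Int.self_le_toNat _
        _ ≤ (N i : ℤ) := by
            exact_mod_cast Finset.le_sup (f := fun j => (-(β i j)).toNat) (Finset.mem_univ j)
    refine ⟨S.card + 1, Fin.cons γ (fun i => β i + (N i : ℤ) • γ), ?_, ?_⟩
    · intro i j hj
      by_cases hjm : j ∈ E ∧ ∃ δ ∈ M, δ j ≠ 0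
      · have h1 : (1 : ℤ) ≤ γ j := hγ j hjm
        refine Fin.cases ?_ ?_ i
        · simpa using le_trans zero_le_one h1
        · intro i
          simp only [Fin.cons_succ, Pi.add_apply, Pi.smul_apply, smul_eq_mul]
          have h2 := hNle i j
          nlinarith [Int.ofNat_nonneg (N i)]
      · have hγ0 : γ j = 0 := hMzero j hj hjm γ hγM
        have hβ0 : ∀ i, β i j = 0 := fun i => hMzero j hj hjm (β i) (hβmem i)
        refine Fin.cases ?_ ?_ i <;> simp [hγ0, hβ0]
    · apply le_antisymm
      · apply Submodule.span_le.mpr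
        rintro x ⟨i, rfl⟩
        refine Fin.cases ?_ ?_ i
        · simpa using hγM
        · intro i
          simp only [Fin.cons_succ]
          exact M.add_mem (hβmem i) (M.smul_mem _ hγM)
      · rw [← hS]
        apply Submodule.span_le.mpr
        intro x hx
        set i := S.equivFin ⟨x, hx⟩ with hi
        have hβx : β i = x := by simp [hβ, hi]
        have hx' : x = (Fin.cons γ (fun i => β i + (N i : ℤ) • γ) : Fin (S.card+1) → Fin n → ℤ) i.succ
            - (N i : ℤ) • (Fin.cons γ (fun i => β i + (N i : ℤ) • γ) : Fin (S.card+1) → Fin n → ℤ) 0 := by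
          simp [Fin.cons_succ, Fin.cons_zero, hβx]
        rw [hx']
        exact sub_mem (Submodule.subset_span ⟨i.succ, rfl⟩)
          (Submodule.smul_mem _ _ (Submodule.subset_span ⟨0, rfl⟩))

/-- `M` is weak-transversal to `E` if and only if there exists `γ ∈ M` with
`γⱼ > 0` for all `j ∈ E_M`. -/
theorem weakTransversal_iff_exists_pos {n : ℕ}
    (M : Submodule ℤ (Fin n → ℤ)) (E : Set (Fin n)) :
    WeakTransversal M E ↔ ∃ γ ∈ M, ∀ j ∈ EM M E, 0 < γ j := by
  exact weakTransversal_iff_exists_pos' M E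
end

section
/- Let M ⊆ ℤⁿ be a ℤ-submodule and E ⊆ {1,…,n} a subset, and assume M is weak-transversal to E. Then M admits a system of ℤ-module generators α₁,…,α_ℓ such that for every i one has αᵢ,ⱼ ≥ 0 for all j ∈ E and αᵢ,ⱼ > 0 for all j ∈ E_M. -/
/-- If `M` is weak-transversal to `E`, then `M` admits a system of `ℤ`-module
generators whose coordinates in `E` are nonnegative and whose coordinates in
`E_M` are (strictly) positive. -/
theorem weakTransversal_exists_positive_generators {n : ℕ}
    (M : Submodule ℤ (Fin n → ℤ)) (E : Set (Fin n)) (h : WeakTransversal M E) :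
    ∃ (ℓ : ℕ) (α : Fin ℓ → Fin n → ℤ),
      (∀ i, ∀ j ∈ E, 0 ≤ α i j) ∧
      (∀ i, ∀ j ∈ EM M E, 0 < α i j) ∧
      Submodule.span ℤ (Set.range α) = M := by
  obtain ⟨ℓ, α, hpos, hspan⟩ := h
  set β : Fin n → ℤ := ∑ i, α i with hβ
  have hαM : ∀ i, α i ∈ M := fun i => hspan ▸ Submodule.subset_span ⟨i, rfl⟩
  have hβM : β ∈ M := Submodule.sum_mem _ fun i _ => hαM i
  have hβE : ∀ j ∈ E, 0 ≤ β j := by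
    intro j hj
    simp only [hβ, Finset.sum_apply]
    exact Finset.sum_nonneg fun i _ => hpos i j hj
  have hβEM : ∀ j ∈ EM M E, 0 < β j := by
    rintro j ⟨hjE, γ, hγM, hγj⟩
    rcases (hβE j hjE).lt_or_eq with hlt | heq
    · exact hlt
    exfalso
    have hall : ∀ i ∈ Finset.univ, α i j = 0 := by
      apply (Finset.sum_eq_zero_iff_of_nonneg (fun i _ => hpos i j hjE)).mp
      have : β j = ∑ i, α i j := by simp [hβ]
      omega
    have hker : M ≤ LinearMap.ker (LinearMap.proj (R := ℤ) (φ := fun _ : Fin n => ℤ) j) := by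
      rw [← hspan, Submodule.span_le]
      rintro x ⟨i, rfl⟩
      simpa using hall i (Finset.mem_univ i)
    exact hγj (hker hγM)
  refine ⟨ℓ + 1, Fin.cons β (fun i => α i + β), ?_, ?_, ?_⟩
  · intro i
    refine Fin.cases ?_ ?_ i
    · exact hβE
    · intro i j hj
      simp only [Fin.cons_succ, Pi.add_apply]
      have := hpos i j hj; have := hβE j hj; omega
  · intro i
    refine Fin.cases ?_ ?_ i
    · exact hβEM
    · intro i j hj
      simp only [Fin.cons_succ, Pi.add_apply]
      have := hpos i j hj.1; have := hβEM j hj; omega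
  · apply le_antisymm
    · rw [Submodule.span_le]
      rintro x ⟨i, rfl⟩
      refine Fin.cases ?_ ?_ i
      · exact hβM
      · intro i
        simpa using M.add_mem (hαM i) hβM
    · rw [← hspan, Submodule.span_le]
      rintro x ⟨i, rfl⟩
      have h1 : α i + β ∈ Submodule.span ℤ (Set.range (Fin.cons β (fun i => α i + β) : Fin (ℓ+1) → Fin n → ℤ)) :=
        Submodule.subset_span ⟨i.succ, by simp⟩
      have h2 : β ∈ Submodule.span ℤ (Set.range (Fin.cons β (fun i => α i + β) : Fin (ℓ+1) → Fin n → ℤ)) :=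
        Submodule.subset_span ⟨0, by simp⟩
      have := Submodule.sub_mem _ h1 h2
      simpa using this
end

section
/- Let E ⊆ {1,…,n} be a subset and M ⊆ ℤⁿ a ℤ-submodule. If M is weak-transversal to E, then Sat(M) is transversal to E; that is, Sat(M) is saturated and admits a system of ℤ-module generators all lying in ℤⁿ_E. -/
/-- If `M` is weak-transversal to `E`, then `Sat(M)` is transversal to `E`:
`Sat(M)` is saturated and admits a system of `ℤ`-module generators lying in `ℤⁿ_E`. -/
theorem sat_transversal_of_weakTransversal {n : ℕ}
    (M : Submodule ℤ (Fin n → ℤ)) (E : Set (Fin n)) (h : WeakTransversal M E) :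
    Sat (Sat M) = Sat M ∧ WeakTransversal (Sat M) E := by
  obtain ⟨ℓ, a, ha, haspan⟩ := h
  have hMSat : M ≤ Sat M := fun x hx => ⟨1, one_ne_zero, by simpa⟩
  refine ⟨le_antisymm ?_ (fun x hx => ⟨1, one_ne_zero, by simpa⟩), ?_⟩
  · rintro x ⟨l, hl, m, hm, hml⟩
    exact ⟨m * l, mul_ne_zero hm hl, by rwa [mul_smul]⟩
  -- the sum of the generators of M
  set σ : Fin n → ℤ := ∑ i, a i with hσ
  have haM : ∀ i, a i ∈ M := fun i =>
    haspan ▸ Submodule.subset_span (Set.mem_range_self i)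
  have hσM : σ ∈ M := Submodule.sum_mem M fun i _ => haM i
  have hσE : ∀ j ∈ E, 0 ≤ σ j := by
    intro j hj
    rw [hσ, Finset.sum_apply]
    exact Finset.sum_nonneg fun i _ => ha i j hj
  -- σ is strictly positive on coordinates of E where Sat M is nonzero
  have hkey : ∀ j ∈ E, (∃ x ∈ Sat M, x j ≠ 0) → 1 ≤ σ j := by
    rintro j hj ⟨x, ⟨l, hl, hlx⟩, hxj⟩
    have hex : ∃ i, a i j ≠ 0 := by
      by_contra hc
      push_neg at hc
      have hle : M ≤ LinearMap.ker (LinearMap.proj j (R := ℤ) (φ := fun _ : Fin n => ℤ)) := by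
        rw [← haspan, Submodule.span_le]
        rintro _ ⟨i, rfl⟩
        simp [LinearMap.mem_ker, hc i]
      have := hle hlx
      rw [LinearMap.mem_ker, LinearMap.proj_apply] at this
      simp only [Pi.smul_apply, smul_eq_mul] at this
      exact hxj (by rcases mul_eq_zero.mp this with h' | h' <;> [exact absurd h' hl; exact h'])
    obtain ⟨i, hi⟩ := hex
    have hpos : 0 < a i j := lt_of_le_of_ne (ha i j hj) (Ne.symm hi)
    have : a i j ≤ σ j := by
      rw [hσ, Finset.sum_apply]
      exact Finset.single_le_sum (fun i _ => ha i j hj) (Finset.mem_univ i)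
    omega
  -- a finite generating set of Sat M
  obtain ⟨S, hS⟩ := IsNoetherian.noetherian (Sat M)
  set b : Fin S.card → Fin n → ℤ := fun i => ((S.equivFin.symm i : S) : Fin n → ℤ) with hb
  have hbSat : ∀ i, b i ∈ Sat M := fun i =>
    hS ▸ Submodule.subset_span (S.equivFin.symm i).2
  set N : Fin S.card → ℤ := fun i => ∑ j, |b i j| with hN
  have hN0 : ∀ i, 0 ≤ N i := fun i => Finset.sum_nonneg fun j _ => abs_nonneg _
  have hNle : ∀ i j, |b i j| ≤ N i := fun i j =>
    Finset.single_le_sum (fun j _ => abs_nonneg (b i j)) (Finset.mem_univ j)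
  refine ⟨S.card + 1, Fin.cons σ (fun i => b i + N i • σ), ?_, ?_⟩
  · intro i j hj
    refine Fin.cases ?_ ?_ i
    · simpa using hσE j hj
    · intro i
      simp only [Fin.cons_succ, Pi.add_apply, Pi.smul_apply, smul_eq_mul]
      by_cases hz : ∃ x ∈ Sat M, x j ≠ 0
      · have h1 := hkey j hj hz
        have h2 := hNle i j
        have h3 := hN0 i
        nlinarith [abs_nonneg (b i j), neg_abs_le (b i j)]
      · push_neg at hz
        have hb0 : b i j = 0 := hz (b i) (hbSat i)
        have := mul_nonneg (hN0 i) (hσE j hj)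
        omega
  · apply le_antisymm
    · rw [Submodule.span_le]
      rintro _ ⟨i, rfl⟩
      refine Fin.cases ?_ ?_ i
      · exact hMSat hσM
      · intro i
        simp only [Fin.cons_succ]
        exact (Sat M).add_mem (hbSat i) ((Sat M).smul_mem _ (hMSat hσM))
    · rw [← hS, Submodule.span_le]
      intro x hx
      set i : Fin S.card := S.equivFin ⟨x, hx⟩ with hi
      have hbi : b i = x := by rw [hb]; simp [hi]
      have hgσ : σ ∈ Submodule.span ℤ (Set.range (Fin.cons σ (fun i => b i + N i • σ))) := by
        have := Submodule.subset_span (R := ℤ)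
          (Set.mem_range_self (f := Fin.cons σ (fun i => b i + N i • σ)) 0)
        simpa using this
      have hgi : b i + N i • σ ∈
          Submodule.span ℤ (Set.range (Fin.cons σ (fun i => b i + N i • σ))) := by
        have := Submodule.subset_span (R := ℤ)
          (Set.mem_range_self (f := Fin.cons σ (fun i => b i + N i • σ)) i.succ)
        simpa using this
      have : b i ∈ Submodule.span ℤ (Set.range (Fin.cons σ (fun i => b i + N i • σ))) := by
        have := Submodule.sub_mem _ hgi (Submodule.smul_mem _ (N i) hgσ)
        simpa using this
      rwa [hbi] at this
end

section
/- Let E ⊆ {1,…,n} be a subset and let L ⊆ ℤⁿ be a saturated ℤ-submodule. Then there exists a unique ℤ-submodule L₀ ⊆ ℤⁿ such that: (1) L₀ ⊆ L; (2) L₀ is transversal to E; (3) every ℤ-submodule L₀′ ⊆ L that is transversal to E satisfies L₀′ ⊆ L₀. -/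
/-- A `ℤ`-submodule is transversal to `E` if it is weak-transversal to `E` and saturated. -/
def Transversal {n : ℕ} (L : Submodule ℤ (Fin n → ℤ)) (E : Set (Fin n)) : Prop :=
  WeakTransversal L E ∧ Sat L = L

private lemma weakTransversal_of_finset {n : ℕ} {M : Submodule ℤ (Fin n → ℤ)} {E : Set (Fin n)}
    (G : Finset (Fin n → ℤ)) (hpos : ∀ g ∈ G, ∀ j ∈ E, 0 ≤ g j)
    (hspan : Submodule.span ℤ (G : Set (Fin n → ℤ)) = M) : WeakTransversal M E := by
  refine ⟨G.card, fun i => ((G.equivFin.symm i : {x // x ∈ G}) : Fin n → ℤ), ?_, ?_⟩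
  · intro i j hj; exact hpos _ (G.equivFin.symm i).2 j hj
  · rw [← hspan]
    congr 1
    ext x
    constructor
    · rintro ⟨i, rfl⟩; exact (G.equivFin.symm i).2
    · intro hx; exact ⟨G.equivFin ⟨x, hx⟩, by simp⟩

/-- For every saturated `ℤ`-submodule `L ⊆ ℤⁿ` there is a unique submodule `L₀`
which is contained in `L`, transversal to `E`, and contains every submodule of `L`
transversal to `E`. -/
theorem existsUnique_maximal_transversal_submodule {n : ℕ}
    (E : Set (Fin n)) (L : Submodule ℤ (Fin n → ℤ)) (hL : Sat L = L) :
    ∃! L₀ : Submodule ℤ (Fin n → ℤ),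
      L₀ ≤ L ∧ Transversal L₀ E ∧
      ∀ L₀' : Submodule ℤ (Fin n → ℤ), L₀' ≤ L → Transversal L₀' E → L₀' ≤ L₀ := by
  classical
  set S : Set (Fin n → ℤ) := {α | α ∈ L ∧ ∀ j ∈ E, 0 ≤ α j} with hS
  set N : Submodule ℤ (Fin n → ℤ) := Submodule.span ℤ S with hN
  have hNL : N ≤ L := Submodule.span_le.2 fun x hx => hx.1
  have hSatNL : Sat N ≤ L := by
    rintro α ⟨l, hl, hla⟩
    rw [← hL]; exact ⟨l, hl, hNL hla⟩
  have hNSat : N ≤ Sat N := fun x hx => ⟨1, one_ne_zero, by simpa⟩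
  have hSatSat : Sat (Sat N) = Sat N := by
    refine le_antisymm ?_ (fun x hx => ⟨1, one_ne_zero, by simpa⟩)
    rintro α ⟨l, hl, m, hm, hml⟩
    exact ⟨m * l, mul_ne_zero hm hl, by rwa [mul_smul]⟩
  -- the special element β
  set T : Finset (Fin n) := Finset.univ.filter (fun j => j ∈ E ∧ ∃ s ∈ S, s j ≠ 0) with hT
  have hchoice : ∀ j ∈ T, ∃ s, s ∈ S ∧ 0 < s j := by
    intro j hj
    rw [hT, Finset.mem_filter] at hj
    obtain ⟨-, hjE, s, hsS, hsj⟩ := hj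
    exact ⟨s, hsS, lt_of_le_of_ne (hsS.2 j hjE) (Ne.symm hsj)⟩
  choose! c hcS hcpos using hchoice
  set β : Fin n → ℤ := ∑ j ∈ T, c j with hβdef
  have hβN : β ∈ N := Submodule.sum_mem _ fun j hj => Submodule.subset_span (hcS j hj)
  have hβnonneg : ∀ j ∈ E, 0 ≤ β j := by
    intro j hj
    rw [hβdef]
    simp only [Finset.sum_apply]
    exact Finset.sum_nonneg fun i hi => (hcS i hi).2 j hj
  have hβpos : ∀ j ∈ T, 0 < β j := by
    intro j hj
    have hjE : j ∈ E := by
      rw [hT, Finset.mem_filter] at hj; exact hj.2.1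
    have h1 : c j j ≤ β j := by
      rw [hβdef]
      simp only [Finset.sum_apply]
      exact Finset.single_le_sum (fun i hi => (hcS i hi).2 j hjE) hj
    exact lt_of_lt_of_le (hcpos j hj) h1
  have hzero : ∀ j ∈ E, j ∉ T → ∀ γ ∈ N, γ j = 0 := by
    intro j hjE hjT γ hγ
    have hall : ∀ s ∈ S, s j = 0 := by
      intro s hs
      by_contra hne
      exact hjT (by rw [hT, Finset.mem_filter]; exact ⟨Finset.mem_univ j, hjE, s, hs, hne⟩)
    have : N ≤ LinearMap.ker ((LinearMap.proj j : (Fin n → ℤ) →ₗ[ℤ] ℤ)) := by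
      rw [hN]
      refine Submodule.span_le.2 fun s hs => ?_
      simpa using hall s hs
    simpa using this hγ
  -- key positivity
  set K : (Fin n → ℤ) → ℤ := fun α => ((Finset.univ.sup fun j => (α j).natAbs : ℕ) : ℤ) with hK
  have hKnonneg : ∀ α, 0 ≤ K α := fun α => Int.ofNat_nonneg _
  have hKbound : ∀ (α : Fin n → ℤ) (j : Fin n), -α j ≤ K α := by
    intro α j
    have h1 : (α j).natAbs ≤ Finset.univ.sup fun j => (α j).natAbs :=
      Finset.le_sup (f := fun j => (α j).natAbs) (Finset.mem_univ j)
    have h2 : -α j ≤ ((α j).natAbs : ℤ) :=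
      (neg_le_abs (α j)).trans_eq (Int.abs_eq_natAbs _)
    calc -α j ≤ ((α j).natAbs : ℤ) := h2
      _ ≤ K α := by simp only [hK]; exact_mod_cast h1
  have key : ∀ α ∈ Sat N, ∀ j ∈ E, 0 ≤ (α + K α • β) j := by
    rintro α ⟨l, hl, hlα⟩ j hjE
    by_cases hjT : j ∈ T
    · have h1 : (1 : ℤ) ≤ β j := hβpos j hjT
      have h2 : -α j ≤ K α := hKbound α j
      have h3 : 0 ≤ K α := hKnonneg α
      simp only [Pi.add_apply, Pi.smul_apply, smul_eq_mul]
      nlinarith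
    · have hαj : α j = 0 := by
        have : (l • α) j = 0 := hzero j hjE hjT _ hlα
        simp only [Pi.smul_apply, smul_eq_mul] at this
        exact (mul_eq_zero.1 this).resolve_left hl
      have hβj : β j = 0 := hzero j hjE hjT β hβN
      simp [hαj, hβj]
  -- finite generation
  obtain ⟨G, hG⟩ : (Sat N).FG := IsNoetherian.noetherian (Sat N)
  set G' : Finset (Fin n → ℤ) := insert β (G.image fun g => g + K g • β) with hG'
  have hG'span : Submodule.span ℤ (G' : Set (Fin n → ℤ)) = Sat N := by
    refine le_antisymm ?_ ?_
    · refine Submodule.span_le.2 fun x hx => ?_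
      rw [hG'] at hx
      simp only [Finset.coe_insert, Set.mem_insert_iff, Finset.coe_image, Set.mem_image] at hx
      rcases hx with rfl | ⟨g, hg, rfl⟩
      · exact hNSat hβN
      · have hgmem : g ∈ Sat N := by
          rw [← hG]; exact Submodule.subset_span hg
        exact (Sat N).add_mem hgmem ((Sat N).smul_mem _ (hNSat hβN))
    · rw [← hG]
      refine Submodule.span_le.2 fun g hg => ?_
      have hβ' : β ∈ Submodule.span ℤ (G' : Set (Fin n → ℤ)) :=
        Submodule.subset_span (by rw [hG']; exact Finset.mem_coe.2 (Finset.mem_insert_self _ _))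
      have hg' : g + K g • β ∈ Submodule.span ℤ (G' : Set (Fin n → ℤ)) := by
        refine Submodule.subset_span ?_
        rw [hG']
        exact Finset.mem_coe.2 (Finset.mem_insert_of_mem (Finset.mem_image_of_mem _ hg))
      have : g = (g + K g • β) - K g • β := by ring_nf
      rw [this]
      exact Submodule.sub_mem _ hg' (Submodule.smul_mem _ _ hβ')
  have hG'pos : ∀ g ∈ G', ∀ j ∈ E, 0 ≤ g j := by
    intro x hx j hj
    rw [hG', Finset.mem_insert] at hx
    rcases hx with rfl | hx
    · exact hβnonneg j hj
    · obtain ⟨g, hg, rfl⟩ := Finset.mem_image.1 hx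
      have hgmem : g ∈ Sat N := by rw [← hG]; exact Submodule.subset_span hg
      exact key g hgmem j hj
  -- assemble
  have htrans : Transversal (Sat N) E :=
    ⟨weakTransversal_of_finset G' hG'pos hG'span, hSatSat⟩
  have hmax : ∀ L₀' : Submodule ℤ (Fin n → ℤ), L₀' ≤ L → Transversal L₀' E → L₀' ≤ Sat N := by
    rintro M hML ⟨⟨ℓ, α, hpos, hspan⟩, -⟩
    rw [← hspan]
    refine Submodule.span_le.2 ?_
    rintro x ⟨i, rfl⟩
    have hxM : α i ∈ M := by
      rw [← hspan]; exact Submodule.subset_span ⟨i, rfl⟩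
    exact hNSat (Submodule.subset_span ⟨hML hxM, hpos i⟩)
  refine ⟨Sat N, ⟨hSatNL, htrans, hmax⟩, ?_⟩
  rintro M ⟨hML, hMtrans, hMmax⟩
  exact le_antisymm (hmax M hML hMtrans) (hMmax (Sat N) hSatNL htrans)
end

section
/- Let k be a field and let R = k[ℤⁿ] be the group algebra of ℤⁿ over k (the Laurent polynomial ring in n variables), writing x^β for the basis element corresponding to β ∈ ℤⁿ. Let β₁,…,β_s ∈ ℤⁿ and let J ⊆ R be the ideal generated by x^{β₁} − 1, …, x^{β_s} − 1. Assume J is a prime ideal. Then for every γ ∈ ℤⁿ, x^γ − 1 ∈ J if and only if γ belongs to the ℤ-submodule of ℤⁿ generated by β₁,…,β_s. -/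
/-- Let `k[ℤⁿ]` be the group algebra of `ℤⁿ` over a field `k` (the Laurent
polynomial ring in `n` variables), with `x^β` the basis element attached to
`β ∈ ℤⁿ`.  If the ideal `J = (x^{β₁} − 1, …, x^{β_s} − 1)` is prime, then for
every `γ ∈ ℤⁿ` one has `x^γ − 1 ∈ J` iff `γ` lies in the `ℤ`-submodule of `ℤⁿ`
generated by `β₁,…,β_s`. -/
theorem mem_hyperbolic_ideal_iff_mem_span {n s : ℕ} (k : Type*) [Field k]
    (β : Fin s → Fin n → ℤ)
    (J : Ideal (AddMonoidAlgebra k (Fin n → ℤ)))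
    (hJ : J = Ideal.span
      (Set.range fun i : Fin s => AddMonoidAlgebra.single (β i) (1 : k) - 1))
    (hprime : J.IsPrime) (γ : Fin n → ℤ) :
    AddMonoidAlgebra.single γ (1 : k) - 1 ∈ J ↔
      γ ∈ Submodule.span ℤ (Set.range β) := by
  set L : Submodule ℤ (Fin n → ℤ) := Submodule.span ℤ (Set.range β) with hL
  constructor
  · -- forward: map to the group algebra of the quotient
    intro hmem
    set π : (Fin n → ℤ) →+ ((Fin n → ℤ) ⧸ L) := L.mkQ.toAddMonoidHom with hπ
    set ψ : AddMonoidAlgebra k (Fin n → ℤ) →+*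
        AddMonoidAlgebra k ((Fin n → ℤ) ⧸ L) :=
      AddMonoidAlgebra.mapDomainRingHom k π with hψ
    have hker : J ≤ RingHom.ker ψ := by
      rw [hJ, Ideal.span_le]
      rintro _ ⟨i, rfl⟩
      have hβi : π (β i) = 0 := by
        simp only [hπ, LinearMap.toAddMonoidHom_coe, Submodule.mkQ_apply,
          Submodule.Quotient.mk_eq_zero]
        exact Submodule.subset_span ⟨i, rfl⟩
      show AddMonoidAlgebra.single (β i) (1 : k) - 1 ∈ RingHom.ker ψ
      rw [RingHom.mem_ker, map_sub, map_one, sub_eq_zero]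
      have hs : ψ (AddMonoidAlgebra.single (β i) (1 : k)) =
          AddMonoidAlgebra.single (π (β i)) (1 : k) := AddMonoidAlgebra.mapDomain_single
      rw [hs, hβi, AddMonoidAlgebra.one_def]
    have h0 : ψ (AddMonoidAlgebra.single γ (1 : k) - 1) = 0 := hker hmem
    rw [map_sub, map_one, sub_eq_zero] at h0
    have h1 : (AddMonoidAlgebra.single (π γ) (1 : k)
        : AddMonoidAlgebra k ((Fin n → ℤ) ⧸ L)) = AddMonoidAlgebra.single 0 1 := by
      have hs : ψ (AddMonoidAlgebra.single γ (1 : k)) =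
          AddMonoidAlgebra.single (π γ) (1 : k) := AddMonoidAlgebra.mapDomain_single
      rw [← AddMonoidAlgebra.one_def, ← h0, hs]
    have h2 : π γ = 0 :=
      AddMonoidAlgebra.single_left_injective (one_ne_zero) h1
    have h3 : γ ∈ L := by
      simpa only [hπ, LinearMap.toAddMonoidHom_coe, Submodule.mkQ_apply,
        Submodule.Quotient.mk_eq_zero] using h2
    exact h3
  · -- reverse: the set of γ with x^γ - 1 ∈ J is a subgroup
    intro hγ
    set S : AddSubgroup (Fin n → ℤ) :=
      { carrier := {δ : Fin n → ℤ | AddMonoidAlgebra.single δ (1 : k) - 1 ∈ J}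
        zero_mem' := by
          simp [AddMonoidAlgebra.one_def]
        add_mem' := by
          intro a b ha hb
          have : AddMonoidAlgebra.single (a + b) (1 : k) - 1 =
              AddMonoidAlgebra.single a (1 : k) *
                (AddMonoidAlgebra.single b (1 : k) - 1) +
              (AddMonoidAlgebra.single a (1 : k) - 1) := by
            rw [mul_sub, AddMonoidAlgebra.single_mul_single]
            ring_nf
          show AddMonoidAlgebra.single (a + b) (1 : k) - 1 ∈ J
          rw [this]
          exact J.add_mem (J.mul_mem_left _ hb) ha
        neg_mem' := by
          intro a ha
          have : AddMonoidAlgebra.single (-a) (1 : k) - 1 =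
              -(AddMonoidAlgebra.single (-a) (1 : k) *
                (AddMonoidAlgebra.single a (1 : k) - 1)) := by
            simp [mul_sub, AddMonoidAlgebra.single_mul_single,
              ← AddMonoidAlgebra.one_def]
          show AddMonoidAlgebra.single (-a) (1 : k) - 1 ∈ J
          rw [this]
          exact J.neg_mem (J.mul_mem_left _ ha) } with hS
    have hle : L ≤ AddSubgroup.toIntSubmodule S := by
      rw [hL, Submodule.span_le]
      rintro _ ⟨i, rfl⟩
      show AddMonoidAlgebra.single (β i) (1 : k) - 1 ∈ J
      rw [hJ]
      exact Ideal.subset_span ⟨i, rfl⟩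
    exact hle hγ
end
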